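/- Let [T1,T1'] be a Tamari interval of size n with interval-poset I1 = IP[T1,T1'], and let I be an interval-poset of size n. Then I = IP[T2,T1'] for some binary tree T2 with T1 ≤ T2 ≤ T1' if and only if every relation of I1 is a relation of I and every relation of I not in I1 is decreasing. Symmetrically, I = IP[T1,T3] for some binary tree T3 with T1 ≤ T3 ≤ T1' if and only if every relation of I1 is a relation of I and every relation of I not in I1 is increasing. -/

import Mathlib

open Polynomial

/-- A binary tree: either the empty tree or a pair of binary trees
(left and right subtrees) grafted on an internal node. -/
inductive BinTree : Type
  | leaf : BinTree
  | node : BinTree → BinTree → BinTree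

namespace BinTree

/-- The size of a binary tree: its number of internal nodes. -/
def size : BinTree → ℕ
  | leaf => 0
  | node l r => l.size + r.size + 1

/-- One right rotation somewhere in the tree: `Rot T T'` means that `T'` is obtained
from `T` by replacing one subtree of the form `y(x(A,B),C)` by `x(A,y(B,C))`. -/
inductive Rot : BinTree → BinTree → Prop
  | root (A B C : BinTree) : Rot (node (node A B) C) (node A (node B C))
  | left {L L' : BinTree} (R : BinTree) : Rot L L' → Rot (node L R) (node L' R)
  | right (L : BinTree) {R R' : BinTree} : Rot R R' → Rot (node L R) (node L R')

/-- The Tamari order: `TamariLE T T'` iff `T'` is obtained from `T` by a (possibly empty)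
sequence of right rotations. -/
def TamariLE (T T' : BinTree) : Prop := Relation.ReflTransGen Rot T T'

/-- The Tamari polynomial `B_T ∈ ℤ[x]`: `B_∅ = 1` and for `T = x(L,R)`, `B_T` is the
unique polynomial with `(x-1)·B_T = x·B_L·(x·B_R - B_R(1))` (exact division by the
monic polynomial `X - 1`, the right-hand side vanishing at `x = 1`). -/
noncomputable def tamPoly : BinTree → Polynomial ℤ
  | leaf => 1
  | node l r =>
      (X * tamPoly l * (X * tamPoly r - C ((tamPoly r).eval 1))) /ₘ (X - C 1)

/-- The mirror Tamari polynomial, obtained by exchanging the roles of the left and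
right subtrees in the recursive definition of the Tamari polynomial. -/
noncomputable def tamPolyMirror : BinTree → Polynomial ℤ
  | leaf => 1
  | node l r =>
      (X * tamPolyMirror r * (X * tamPolyMirror l - C ((tamPolyMirror l).eval 1))) /ₘ (X - C 1)

/-- The number of nodes on the left border of a binary tree. -/
def leftBorder : BinTree → ℕ
  | leaf => 0
  | node l _ => l.leftBorder + 1

/-- The number of nodes on the right border of a binary tree. -/
def rightBorder : BinTree → ℕ
  | leaf => 0
  | node _ r => r.rightBorder + 1

/-- `inSub T a b`: in the unique binary-search-tree labelling of `T` by `1,…,size T`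
(all labels of the left subtree of a node are smaller than its label, all labels of its
right subtree are larger), the node labelled `a` belongs to the subtree rooted at the
node labelled `b` (in particular `inSub T a a` holds for every node label `a`). -/
def inSub : BinTree → ℕ → ℕ → Prop
  | leaf => fun _ _ => False
  | node l r => fun a b =>
      (b = l.size + 1 ∧ 1 ≤ a ∧ a ≤ l.size + r.size + 1) ∨
      inSub l a b ∨
      (l.size + 1 < a ∧ l.size + 1 < b ∧ inSub r (a - (l.size + 1)) (b - (l.size + 1)))

/-- The binary search tree poset of `T`: `bstRel T a b` iff `a ≺_T b`, i.e. `a ≠ b` and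
the node labelled `a` is in the subtree rooted at the node labelled `b`. -/
def bstRel (T : BinTree) (a b : ℕ) : Prop := a ≠ b ∧ inSub T a b

/-- The increasing forest `inc(T)`: `a ≺ b` iff `a < b` and `a ≺_T b`. -/
def incRel (T : BinTree) (a b : ℕ) : Prop := a < b ∧ bstRel T a b

/-- The decreasing forest `dec(T)`: `b ≺ a` iff `b > a` and `b ≺_T a`. -/
def decRel (T : BinTree) (a b : ℕ) : Prop := b < a ∧ bstRel T a b

/-- The relations of the interval-poset `IP[T,T']`: exactly those of `dec(T)`
together with those of `inc(T')`. -/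
def IPrel (T T' : BinTree) (a b : ℕ) : Prop := decRel T a b ∨ incRel T' a b

end BinTree

open BinTree

/-- `σ` is a linear extension of the strict relation `rel` on `{1,…,n}`: reading the word
`σ(1)…σ(n)` (the `i`-th letter being the label `(σ i : ℕ) + 1`), whenever `rel a b` holds
the letter `a` appears before the letter `b`. -/
def IsLinExt (n : ℕ) (rel : ℕ → ℕ → Prop) (σ : Equiv.Perm (Fin n)) : Prop :=
  ∀ i j : Fin n, rel ((σ i : ℕ) + 1) ((σ j : ℕ) + 1) → i < j

/-- An interval-poset of size `n`: a (strict) poset on `{1,…,n}` such that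
`a ≺ c` implies `b ≺ c` for all `a < b < c`, and `c ≺ a` implies `b ≺ a` for all
`a < b < c`. -/
def IsIntervalPoset (n : ℕ) (rel : ℕ → ℕ → Prop) : Prop :=
  (∀ a b, rel a b → 1 ≤ a ∧ a ≤ n ∧ 1 ≤ b ∧ b ≤ n) ∧
  (∀ a, ¬ rel a a) ∧
  (∀ a b c, rel a b → rel b c → rel a c) ∧
  (∀ a b c, a < b → b < c → rel a c → rel b c) ∧
  (∀ a b c, a < b → b < c → rel c a → rel b a)

/-- `trees(P)` : the number of connected components of the forest formed by the decreasing
relations of `P`, i.e. the number of `k ∈ {1,…,n}` such that there is no `j < k`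
with `k ≺_P j`. -/
noncomputable def treeStat (n : ℕ) (rel : ℕ → ℕ → Prop) : ℕ :=
  Set.ncard {k : ℕ | 1 ≤ k ∧ k ≤ n ∧ ∀ j, j < k → ¬ rel k j}

/-- The composition `𝔹(I1,I2)` of two interval-posets of sizes `k1` and `k2`:
the set of interval-posets `I` of size `k1+k2+1` such that
(i) the relations of `I` among `1,…,k1` are exactly those of `I1`,
(ii) the relations of `I` among `k1+2,…,k1+k2+1` are exactly those of `I2` shifted
by `k1+1`, (iii) `i ≺_I k1+1` for all `i ≤ k1`, and (iv) there is no relation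
`k1+1 ≺_I j` for `j > k1+1`. -/
def Comp (k1 k2 : ℕ) (I1 I2 : ℕ → ℕ → Prop) : Set (ℕ → ℕ → Prop) :=
  {I | IsIntervalPoset (k1 + k2 + 1) I ∧
    (∀ a b, 1 ≤ a → a ≤ k1 → 1 ≤ b → b ≤ k1 → (I a b ↔ I1 a b)) ∧
    (∀ a b, k1 + 2 ≤ a → a ≤ k1 + k2 + 1 → k1 + 2 ≤ b → b ≤ k1 + k2 + 1 →
      (I a b ↔ I2 (a - (k1 + 1)) (b - (k1 + 1)))) ∧
    (∀ i, 1 ≤ i → i ≤ k1 → I i (k1 + 1)) ∧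
    (∀ j, k1 + 1 < j → ¬ I (k1 + 1) j)}

/-- The co-inversions of a permutation `σ` of `{1,…,n}` (written as the word
`σ(1)…σ(n)`): pairs `(σ(i), σ(j))` with `i < j` and `σ(i) > σ(j)`. -/
def coinv (n : ℕ) (σ : Equiv.Perm (Fin n)) : Set (Fin n × Fin n) :=
  {p | ∃ i j : Fin n, i < j ∧ σ j < σ i ∧ p = (σ i, σ j)}

namespace BinTree

/-- right-subtree size of node labelled `b`. -/
def rsz : BinTree → ℕ → ℕ
  | leaf, _ => 0
  | node l r, b =>
      if b < l.size + 1 then rsz l b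
      else if b = l.size + 1 then r.size
      else rsz r (b - (l.size + 1))

lemma rsz_node_lt {l r : BinTree} {b : ℕ} (h : b < l.size + 1) :
    rsz (node l r) b = rsz l b := by simp [rsz, h]

lemma rsz_node_eq {l r : BinTree} : rsz (node l r) (l.size + 1) = r.size := by
  simp [rsz]

lemma rsz_node_gt {l r : BinTree} {b : ℕ} (h : l.size + 1 < b) :
    rsz (node l r) b = rsz r (b - (l.size + 1)) := by
  rw [rsz, if_neg (by omega), if_neg (by omega)]

lemma inSub_bounds {T : BinTree} {a b : ℕ} (h : inSub T a b) :
    1 ≤ a ∧ a ≤ T.size ∧ 1 ≤ b ∧ b ≤ T.size := by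
  induction T generalizing a b with
  | leaf => exact absurd h (by simp [inSub])
  | node l r ihl ihr =>
    simp only [inSub, size] at h ⊢
    rcases h with ⟨hb, h1, h2⟩ | h | ⟨ha, hb, h⟩
    · omega
    · have := ihl h; omega
    · have := ihr h; omega

lemma rsz_out {T : BinTree} {b : ℕ} (h : T.size < b ∨ b = 0) : rsz T b = 0 := by
  induction T generalizing b with
  | leaf => rfl
  | node l r ihl ihr =>
    simp only [size] at h
    rcases h with h | rfl
    · rw [rsz_node_gt (by omega)]
      exact ihr (by omega)
    · rw [rsz_node_lt (by omega)]
      exact ihl (by omega)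

lemma rsz_le {T : BinTree} {b : ℕ} (h : b ≤ T.size) : b + rsz T b ≤ T.size := by
  induction T generalizing b with
  | leaf => simpa [rsz] using h
  | node l r ihl ihr =>
    simp only [size] at h ⊢
    rcases lt_trichotomy b (l.size + 1) with hb | hb | hb
    · rw [rsz_node_lt hb]; have := ihl (b := b) (by omega); omega
    · subst hb; rw [rsz_node_eq]; omega
    · rw [rsz_node_gt hb]; have := ihr (b := b - (l.size + 1)) (by omega); omega

lemma decIff {T : BinTree} {a b : ℕ} (hba : b < a) :
    inSub T a b ↔ 1 ≤ b ∧ a ≤ b + rsz T b := by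
  induction T generalizing a b with
  | leaf =>
    simp only [inSub, rsz]
    constructor
    · intro h; exact h.elim
    · intro ⟨h1, h2⟩; omega
  | node l r ihl ihr =>
    simp only [inSub, size]
    constructor
    · rintro (⟨hb, h1, h2⟩ | h | ⟨ha, hb, h⟩)
      · subst hb; rw [rsz_node_eq]; omega
      · have hbd := inSub_bounds h
        rw [rsz_node_lt (by omega)]
        exact (ihl hba).1 h
      · rw [rsz_node_gt hb]
        have := (ihr (a := a - (l.size+1)) (b := b - (l.size+1)) (by omega)).1 h
        omega
    · intro hh
      rcases lt_trichotomy b (l.size + 1) with h1 | h1 | h1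
      · rw [rsz_node_lt h1] at hh
        right; left
        exact (ihl hba).2 hh
      · subst h1; rw [rsz_node_eq] at hh
        left; omega
      · rw [rsz_node_gt h1] at hh
        right; right
        refine ⟨by omega, by omega, ?_⟩
        exact (ihr (by omega)).2 ⟨by omega, by omega⟩

/-- nesting: the interval of `a` is contained (on the right) in that of `b`. -/
lemma inSub_M_le {T : BinTree} {a b : ℕ} (h : inSub T a b) :
    a + rsz T a ≤ b + rsz T b := by
  induction T generalizing a b with
  | leaf => exact absurd h (by simp [inSub])
  | node l r ihl ihr =>
    simp only [inSub] at h
    rcases h with ⟨hb, h1, h2⟩ | h | ⟨ha, hb, h⟩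
    · subst hb
      rw [rsz_node_eq]
      have : a + rsz (node l r) a ≤ (node l r).size := rsz_le (by simpa [size] using h2)
      simp only [size] at this; omega
    · have hbd := inSub_bounds h
      rw [rsz_node_lt (by omega), rsz_node_lt (by omega)]
      exact ihl h
    · have hbd := inSub_bounds h
      rw [rsz_node_gt ha, rsz_node_gt hb]
      have := ihr h
      omega

lemma inSub_antisymm {T : BinTree} {a b : ℕ} (h1 : inSub T a b) (h2 : inSub T b a) :
    a = b := by
  induction T generalizing a b with
  | leaf => exact absurd h1 (by simp [inSub])
  | node l r ihl ihr =>
    simp only [inSub] at h1 h2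
    rcases h1 with ⟨hb, _, _⟩ | h1 | ⟨ha, hb, h1⟩
    · rcases h2 with ⟨hb2, _, _⟩ | h2 | ⟨ha2, hb2, h2⟩
      · omega
      · have := inSub_bounds h2; omega
      · omega
    · have hbd := inSub_bounds h1
      rcases h2 with ⟨hb2, _, _⟩ | h2 | ⟨ha2, hb2, h2⟩
      · omega
      · exact ihl h1 h2
      · omega
    · rcases h2 with ⟨hb2, _, _⟩ | h2 | ⟨ha2, hb2, h2⟩
      · omega
      · have := inSub_bounds h2; omega
      · have := ihr h1 h2; omega

lemma lca {T : BinTree} {b c : ℕ} (hb : 1 ≤ b) (hbc : b ≤ c) (hc : c ≤ T.size) :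
    ∃ z, b ≤ z ∧ z ≤ c ∧ inSub T b z ∧ inSub T c z := by
  induction T generalizing b c with
  | leaf => simp only [size] at hc; omega
  | node l r ihl ihr =>
    simp only [size] at hc
    by_cases h1 : c ≤ l.size
    · obtain ⟨z, hz1, hz2, hz3, hz4⟩ := ihl hb hbc h1
      exact ⟨z, hz1, hz2, Or.inr (Or.inl hz3), Or.inr (Or.inl hz4)⟩
    · by_cases h2 : l.size + 1 < b
      · obtain ⟨z, hz1, hz2, hz3, hz4⟩ := ihr (b := b - (l.size+1)) (c := c - (l.size+1))
          (by omega) (by omega) (by omega)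
        refine ⟨z + (l.size + 1), by omega, by omega, ?_, ?_⟩
        · exact Or.inr (Or.inr ⟨by omega, by omega, by simpa using hz3⟩)
        · exact Or.inr (Or.inr ⟨by omega, by omega, by simpa using hz4⟩)
      · exact ⟨l.size + 1, by omega, by omega,
          Or.inl ⟨rfl, by omega, by omega⟩, Or.inl ⟨rfl, by omega, by omega⟩⟩

/-- if nobody in `[b, y)` reaches `y`, then `b` is in the subtree of `y`. -/
lemma inSub_of_gaps {T : BinTree} {b y : ℕ} (hb : 1 ≤ b) (hby : b ≤ y) (hy : y ≤ T.size)
    (h : ∀ e, b ≤ e → e < y → e + rsz T e < y) : inSub T b y := by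
  obtain ⟨z, hz1, hz2, hz3, hz4⟩ := lca hb hby hy
  rcases eq_or_lt_of_le hz2 with rfl | hzy
  · exact hz3
  · have h5 := (decIff hzy).1 hz4
    have := h z hz1 hzy
    omega

lemma size_rot {T T' : BinTree} (h : Rot T T') : T'.size = T.size := by
  induction h with
  | root A B C => simp only [size]; omega
  | left R _ ih => simp only [size]; omega
  | right L _ ih => simp only [size]; omega

lemma rsz_rot {T T' : BinTree} (h : Rot T T') (b : ℕ) : rsz T b ≤ rsz T' b := by
  induction h generalizing b with
  | root A B C =>
    rcases lt_trichotomy b (A.size + 1) with hb | hb | hb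
    · rw [rsz_node_lt (by simp only [size]; omega), rsz_node_lt hb,
        rsz_node_lt hb]
    · subst hb
      rw [rsz_node_lt (by simp only [size]; omega), rsz_node_eq, rsz_node_eq]
      simp only [size]; omega
    · rcases lt_trichotomy b ((node A B).size + 1) with hb2 | hb2 | hb2
      · rw [rsz_node_lt hb2, rsz_node_gt hb, rsz_node_gt hb,
          rsz_node_lt (by simp only [size] at hb2 ⊢; omega)]
      · subst hb2
        rw [rsz_node_eq, rsz_node_gt hb]
        have : (node A B).size + 1 - (A.size + 1) = B.size + 1 := by
          simp only [size]; omega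
        rw [this, rsz_node_eq]
      · rw [rsz_node_gt hb2, rsz_node_gt hb, rsz_node_gt
          (by simp only [size] at hb2 ⊢; omega)]
        have : b - (A.size + 1) - (B.size + 1) = b - ((node A B).size + 1) := by
          simp only [size]; omega
        rw [this]
  | @left L L' R hr ih =>
    have hs : L'.size = L.size := size_rot (by assumption)
    rcases lt_trichotomy b (L.size + 1) with hb | hb | hb
    · rw [rsz_node_lt hb, rsz_node_lt (by omega)]; exact ih b
    · subst hb; rw [rsz_node_eq, ← hs, rsz_node_eq]
    · rw [rsz_node_gt hb, rsz_node_gt (by omega), hs]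
  | @right L R R' hr ih =>
    rcases lt_trichotomy b (L.size + 1) with hb | hb | hb
    · rw [rsz_node_lt hb, rsz_node_lt hb]
    · subst hb
      rw [rsz_node_eq, rsz_node_eq]
      have := size_rot hr; omega
    · rw [rsz_node_gt hb, rsz_node_gt hb]; exact ih _

lemma rsz_tamari {T T' : BinTree} (h : TamariLE T T') (b : ℕ) : rsz T b ≤ rsz T' b := by
  induction h with
  | refl => exact le_rfl
  | tail _ hr ih => exact le_trans ih (rsz_rot hr b)

lemma size_tamari {T T' : BinTree} (h : TamariLE T T') : T'.size = T.size := by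
  induction h with
  | refl => rfl
  | tail _ hr ih => rw [size_rot hr, ih]

lemma tamari_node_left {L L' : BinTree} (R : BinTree) (h : TamariLE L L') :
    TamariLE (node L R) (node L' R) :=
  h.lift (fun X => node X R) (fun _ _ hr => Rot.left R hr)

lemma tamari_node_right (L : BinTree) {R R' : BinTree} (h : TamariLE R R') :
    TamariLE (node L R) (node L R') :=
  h.lift (fun X => node L X) (fun _ _ hr => Rot.right L hr)

lemma rsz_inj : ∀ {T T' : BinTree}, T.size = T'.size →
    (∀ b, 1 ≤ b → b ≤ T.size → rsz T b = rsz T' b) → T = T' := by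
  intro T
  induction T with
  | leaf =>
    intro T' hs _
    cases T' with
    | leaf => rfl
    | node l' r' => simp only [size] at hs; omega
  | node l r ihl ihr =>
    intro T' hs heq
    cases T' with
    | leaf => simp only [size] at hs; omega
    | node l' r' =>
      simp only [size] at hs
      have hll' : l.size = l'.size := by
        by_contra hne
        rcases lt_or_gt_of_ne hne with hlt | hgt
        · have h1 := heq (l.size + 1) (by omega) (by simp only [size]; omega)
          rw [rsz_node_eq, rsz_node_lt (by omega)] at h1
          have := rsz_le (T := l') (b := l.size + 1) (by omega)
          omega
        · have h1 := heq (l'.size + 1) (by omega) (by simp only [size]; omega)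
          rw [rsz_node_eq (l := l'), rsz_node_lt (by omega)] at h1
          have := rsz_le (T := l) (b := l'.size + 1) (by omega)
          omega
      have hl : l = l' := by
        apply ihl hll'
        intro b hb1 hb2
        have := heq b hb1 (by simp only [size]; omega)
        rwa [rsz_node_lt (by omega), rsz_node_lt (by omega)] at this
      have hr : r = r' := by
        apply ihr (by omega)
        intro b hb1 hb2
        have := heq (b + (l.size + 1)) (by omega) (by simp only [size]; omega)
        rw [rsz_node_gt (by omega), rsz_node_gt (by omega)] at this
        rw [hll'] at this
        simpa [hll'] using this
      rw [hl, hr]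

lemma rot_exists : ∀ {T : BinTree} {y b0 : ℕ}, b0 < y → inSub T b0 y →
    ∃ T₂ x, Rot T T₂ ∧ x < y ∧ inSub T x y ∧ x + rsz T x + 1 = y ∧
      (∀ c, c < y → inSub T c y → c = x ∨ inSub T c x) ∧
      (∀ c, c ≠ x → rsz T₂ c = rsz T c) ∧
      x + rsz T₂ x = y + rsz T y ∧ T₂.size = T.size := by
  intro T
  induction T with
  | leaf => intro y b0 _ hsub; exact absurd hsub (by simp [inSub])
  | node l r ihl ihr =>
    intro y b0 hb0y hsub
    have hbd := inSub_bounds hsub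
    rcases hsub with ⟨hyρ, hb01, hb0n⟩ | hsub | ⟨hb0ρ, hyρ, hsub⟩
    · -- y is the root
      subst hyρ
      cases l with
      | leaf => simp only [size] at hb0y hb01 ⊢; omega
      | node A B =>
        refine ⟨node A (node B r), A.size + 1, Rot.root A B r, ?_, ?_, ?_, ?_, ?_, ?_, ?_⟩
        · simp only [size]; omega
        · exact Or.inl ⟨rfl, by omega, by simp only [size]; omega⟩
        · rw [rsz_node_lt (by simp only [size]; omega), rsz_node_eq]
          simp only [size]; omega
        · intro c hc hcsub
          have hcb := inSub_bounds hcsub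
          right
          exact Or.inr (Or.inl (Or.inl ⟨rfl, by omega, by simp only [size] at hc ⊢; omega⟩))
        · intro c hc
          rcases lt_trichotomy c (A.size + 1) with h1 | h1 | h1
          · rw [rsz_node_lt h1, rsz_node_lt (by simp only [size]; omega), rsz_node_lt h1]
          · omega
          · rcases lt_trichotomy c ((node A B).size + 1) with h2 | h2 | h2
            · rw [rsz_node_gt h1, rsz_node_lt (by simp only [size] at h2 ⊢; omega),
                rsz_node_lt h2, rsz_node_gt h1]
            · subst h2
              rw [rsz_node_gt h1]
              have e1 : (node A B).size + 1 - (A.size + 1) = B.size + 1 := by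
                simp only [size]; omega
              rw [e1, rsz_node_eq, rsz_node_eq]
            · rw [rsz_node_gt h1, rsz_node_gt (by simp only [size] at h2 ⊢; omega),
                rsz_node_gt h2]
              have e1 : c - (A.size + 1) - (B.size + 1) = c - ((node A B).size + 1) := by
                simp only [size]; omega
              rw [e1]
        · rw [rsz_node_eq, rsz_node_eq]
          simp only [size]; omega
        · simp only [size]; omega
    · -- recurse left
      have hbd' := inSub_bounds hsub
      obtain ⟨l₂, x, hrot, hxy, hxsub, hxr, hroot, hrsz, hnew, hsz⟩ := ihl hb0y hsub
      have hyl : y ≤ l.size := hbd'.2.2.2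
      refine ⟨node l₂ r, x, Rot.left r hrot, hxy, Or.inr (Or.inl hxsub), ?_, ?_, ?_, ?_, ?_⟩
      · rw [rsz_node_lt (by omega)]; exact hxr
      · intro c hc hcsub
        have : inSub l c y := by
          rcases hcsub with ⟨h1, _, _⟩ | h1 | ⟨h1, h2, h3⟩
          · omega
          · exact h1
          · omega
        rcases hroot c hc this with h | h
        · exact Or.inl h
        · exact Or.inr (Or.inr (Or.inl h))
      · intro c hc
        rcases lt_trichotomy c (l.size + 1) with h1 | h1 | h1
        · rw [rsz_node_lt (by omega), rsz_node_lt h1]; exact hrsz c hc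
        · subst h1; rw [rsz_node_eq, ← hsz, rsz_node_eq]
        · rw [rsz_node_gt (by omega), rsz_node_gt h1, hsz]
      · rw [rsz_node_lt (by omega), rsz_node_lt (by omega)]
        exact hnew
      · simp only [size]; omega
    · -- recurse right
      have hbd' := inSub_bounds hsub
      obtain ⟨r₂, x', hrot, hxy, hxsub, hxr, hroot, hrsz, hnew, hsz⟩ :=
        ihr (y := y - (l.size + 1)) (b0 := b0 - (l.size + 1)) (by omega) hsub
      have hx'bd := inSub_bounds hxsub
      refine ⟨node l r₂, x' + (l.size + 1), Rot.right l hrot, by omega, ?_, ?_, ?_, ?_, ?_, ?_⟩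
      · exact Or.inr (Or.inr ⟨by omega, by omega, by simpa using hxsub⟩)
      · rw [rsz_node_gt (by omega)]
        have e : x' + (l.size + 1) - (l.size + 1) = x' := by omega
        rw [e]
        omega
      · intro c hc hcsub
        have hcbd := inSub_bounds hcsub
        have hc3 : l.size + 1 < c ∧ inSub r (c - (l.size + 1)) (y - (l.size + 1)) := by
          rcases hcsub with ⟨h1, _, _⟩ | h1 | ⟨h1, h2, h3⟩
          · omega
          · have := inSub_bounds h1; omega
          · exact ⟨h1, h3⟩
        rcases hroot (c - (l.size + 1)) (by omega) hc3.2 with h | h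
        · left; omega
        · right
          exact Or.inr (Or.inr ⟨hc3.1, by omega, by simpa using h⟩)
      · intro c hc
        rcases lt_trichotomy c (l.size + 1) with h1 | h1 | h1
        · rw [rsz_node_lt h1, rsz_node_lt h1]
        · subst h1; rw [rsz_node_eq, rsz_node_eq, hsz]
        · rw [rsz_node_gt h1, rsz_node_gt h1]
          exact hrsz _ (by omega)
      · rw [rsz_node_gt (by omega), rsz_node_gt (by omega)]
        have e1 : x' + (l.size + 1) - (l.size + 1) = x' := by omega
        rw [e1]
        omega
      · simp only [size]; omega

lemma main_up {n : ℕ} (f : ℕ → ℕ)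
    (hfle : ∀ b, 1 ≤ b → b ≤ n → b + f b ≤ n)
    (hfnest : ∀ b c, 1 ≤ b → b < c → c ≤ b + f b → c + f c ≤ b + f b) :
    ∀ (k : ℕ) (T : BinTree), T.size = n → (∀ b, 1 ≤ b → b ≤ n → rsz T b ≤ f b) →
      (∑ b ∈ Finset.Icc 1 n, (f b - rsz T b)) ≤ k →
      ∃ T2 : BinTree, T2.size = n ∧ TamariLE T T2 ∧
        (∀ b, 1 ≤ b → b ≤ n → rsz T2 b = f b) := by
  intro k
  induction k with
  | zero =>
    intro T hT hle hsum
    refine ⟨T, hT, Relation.ReflTransGen.refl, fun b hb1 hb2 => ?_⟩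
    have h0 : ∀ i ∈ Finset.Icc 1 n, f i - rsz T i = 0 :=
      (Finset.sum_eq_zero_iff).1 (Nat.le_zero.1 hsum)
    have := h0 b (Finset.mem_Icc.2 ⟨hb1, hb2⟩)
    have := hle b hb1 hb2
    omega
  | succ k ih =>
    intro T hT hle hsum
    by_cases hall : ∀ b, 1 ≤ b → b ≤ n → rsz T b = f b
    · exact ⟨T, hT, Relation.ReflTransGen.refl, hall⟩
    · push_neg at hall
      obtain ⟨b₀, hb₀1, hb₀2, hb₀3⟩ := hall
      set P : ℕ → Prop := fun b => 1 ≤ b ∧ b ≤ n ∧ rsz T b < f b with hP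
      have hPb₀ : P b₀ := ⟨hb₀1, hb₀2, lt_of_le_of_ne (hle _ hb₀1 hb₀2) hb₀3⟩
      set b : ℕ := Nat.findGreatest P n with hbdef
      have hble : b₀ ≤ b := Nat.le_findGreatest hb₀2 hPb₀
      have hPb : P b := Nat.findGreatest_spec hb₀2 hPb₀
      obtain ⟨hb1, hb2, hb3⟩ := hPb
      have hEq : ∀ c, b < c → c ≤ n → rsz T c = f c := by
        intro c hc1 hc2
        have hnc := Nat.findGreatest_is_greatest (hbdef ▸ hc1) hc2
        simp only [hP, not_and, not_lt] at hnc
        exact le_antisymm (hle c (by omega) hc2) (hnc (by omega) hc2)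
      set y : ℕ := b + rsz T b + 1 with hydef
      have hyb : y ≤ b + f b := by omega
      have hyn : y ≤ n := le_trans hyb (hfle b hb1 hb2)
      have hgaps : ∀ e, b ≤ e → e < y → e + rsz T e < y := by
        intro e he1 he2
        rcases eq_or_lt_of_le he1 with rfl | he1
        · omega
        · have : inSub T e b := (decIff he1).2 ⟨hb1, by omega⟩
          have := inSub_M_le this
          omega
      have hby : inSub T b y := inSub_of_gaps hb1 (by omega) (by omega) hgaps
      obtain ⟨T₂, x, hrot, hxy, hxsub, hxr, hroot, hrszeq, hxnew, hszeq⟩ :=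
        rot_exists (show b < y by omega) hby
      have hxbd := inSub_bounds hxsub
      have hx1 : 1 ≤ x := hxbd.1
      have hxn : x ≤ n := by have := hxbd.2.1; omega
      have hxb : x ≤ b := by
        rcases hroot b (by omega) hby with h | h
        · omega
        · by_contra hgt
          push_neg at hgt
          have h2 : inSub T x b := (decIff hgt).2 ⟨hb1, by omega⟩
          have := inSub_antisymm h h2
          omega
      have hTy : rsz T y ≤ f y := hle y (by omega) hyn
      have hnesty : y + f y ≤ b + f b := hfnest b y hb1 (by omega) hyb
      have hkey : x + rsz T₂ x ≤ x + f x := by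
        rcases eq_or_lt_of_le hxb with rfl | hxb'
        · omega
        · have h1 : rsz T x ≤ f x := hle x hx1 hxn
          have h2 : b ≤ x + f x := by omega
          have h3 : b + f b ≤ x + f x := hfnest x b hx1 hxb' h2
          omega
      have hle₂ : ∀ c, 1 ≤ c → c ≤ n → rsz T₂ c ≤ f c := by
        intro c hc1 hc2
        by_cases hcx : c = x
        · subst hcx; omega
        · rw [hrszeq c hcx]; exact hle c hc1 hc2
      have hstrict : rsz T x < rsz T₂ x := by omega
      have hsum₂ : (∑ c ∈ Finset.Icc 1 n, (f c - rsz T₂ c)) ≤ k := by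
        have hlt : (∑ c ∈ Finset.Icc 1 n, (f c - rsz T₂ c)) <
            (∑ c ∈ Finset.Icc 1 n, (f c - rsz T c)) := by
          apply Finset.sum_lt_sum
          · intro i _
            by_cases hix : i = x
            · subst hix; omega
            · rw [hrszeq i hix]
          · exact ⟨x, Finset.mem_Icc.2 ⟨hx1, hxn⟩, by omega⟩
        omega
      obtain ⟨T3, hT3s, hT3t, hT3e⟩ := ih T₂ (hszeq.trans hT) hle₂ hsum₂
      exact ⟨T3, hT3s, Relation.ReflTransGen.head hrot hT3t, hT3e⟩

lemma tamari_of_rsz_le {T T' : BinTree} (hs : T.size = T'.size)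
    (h : ∀ b, 1 ≤ b → b ≤ T.size → rsz T b ≤ rsz T' b) : TamariLE T T' := by
  obtain ⟨T2, hT2s, ht, hT2e⟩ := main_up (n := T.size) (rsz T')
    (fun b hb1 hb2 => by have := rsz_le (T := T') (b := b) (by omega); omega)
    (fun b c hb1 hbc hcle => by
      have hsub : inSub T' c b := (decIff hbc).2 ⟨hb1, hcle⟩
      exact inSub_M_le hsub)
    (∑ b ∈ Finset.Icc 1 T.size, (rsz T' b - rsz T b)) T rfl h le_rfl
  have : T2 = T' := by
    apply rsz_inj (by omega)
    intro b hb1 hb2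
    exact hT2e b hb1 (by omega)
  exact this ▸ ht

lemma part1 (n : ℕ) (T1 T1' : BinTree)
    (h1 : T1.size = n) (h1' : T1'.size = n) (ht : TamariLE T1 T1')
    (I : ℕ → ℕ → Prop) (hI : IsIntervalPoset n I) :
    (∃ T2 : BinTree, T2.size = n ∧ TamariLE T1 T2 ∧ TamariLE T2 T1' ∧
        ∀ a b, I a b ↔ IPrel T2 T1' a b) ↔
      ((∀ a b, IPrel T1 T1' a b → I a b) ∧
        ∀ a b, I a b → ¬ IPrel T1 T1' a b → b < a) := by
  obtain ⟨hIbd, hirr, htrans, hax4, hax5⟩ := hI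
  constructor
  · rintro ⟨T2, hT2s, ht12, ht21', hIiff⟩
    constructor
    · rintro a b (⟨hba, hne, hsub⟩ | hinc)
      · apply (hIiff a b).2
        left
        have h2 := (decIff hba).1 hsub
        have h3 := rsz_tamari ht12 b
        exact ⟨hba, hne, (decIff hba).2 ⟨h2.1, by omega⟩⟩
      · exact (hIiff a b).2 (Or.inr hinc)
    · intro a b hIab hnot
      rcases (hIiff a b).1 hIab with ⟨hba, _⟩ | hinc
      · exact hba
      · exact absurd (Or.inr hinc) hnot
  · rintro ⟨H1, H2⟩
    classical
    set f : ℕ → ℕ := fun b => Nat.findGreatest (fun k => I (b + k) b) n with hf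
    have hfP : ∀ b, f b ≠ 0 → I (b + f b) b := by
      intro b hb
      have := (Nat.findGreatest_eq_iff.1 (rfl : Nat.findGreatest (fun k => I (b + k) b) n = f b))
      exact this.2.1 hb
    have hfchar : ∀ a b, b < a → (I a b ↔ 1 ≤ b ∧ a ≤ b + f b) := by
      intro a b hba
      constructor
      · intro hIab
        have hbd := hIbd a b hIab
        have hk : a - b ≤ n := by omega
        have hle : a - b ≤ f b := Nat.le_findGreatest hk
          (by rwa [show b + (a - b) = a by omega])
        exact ⟨hbd.2.2.1, by omega⟩
      · rintro ⟨hb1, hble⟩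
        have hf0 : f b ≠ 0 := by omega
        have hPf := hfP b hf0
        rcases eq_or_lt_of_le hble with heq | hlt
        · rwa [heq]
        · exact hax5 b a (b + f b) hba hlt hPf
    have hf_le_n : ∀ b, 1 ≤ b → b ≤ n → b + f b ≤ n := by
      intro b hb1 hb2
      by_cases h0 : f b = 0
      · omega
      · have := hIbd _ _ (hfP b h0); omega
    have hfnest : ∀ b c, 1 ≤ b → b < c → c ≤ b + f b → c + f c ≤ b + f b := by
      intro b c hb1 hbc hcle
      by_cases h0 : f c = 0
      · omega
      · have h1 : I (c + f c) c := hfP c h0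
        have h2 : I c b := (hfchar c b hbc).2 ⟨hb1, hcle⟩
        have h3 : I (c + f c) b := htrans _ _ _ h1 h2
        have := (hfchar (c + f c) b (by omega)).1 h3
        omega
    have hf_ge : ∀ b, 1 ≤ b → b ≤ n → rsz T1 b ≤ f b := by
      intro b hb1 hb2
      by_cases h0 : rsz T1 b = 0
      · omega
      · have hsub : inSub T1 (b + rsz T1 b) b := (decIff (by omega)).2 ⟨hb1, le_rfl⟩
        have hIr : I (b + rsz T1 b) b :=
          H1 _ _ (Or.inl ⟨by omega, by omega, hsub⟩)
        have := (hfchar _ b (by omega)).1 hIr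
        omega
    have hf_le' : ∀ b, 1 ≤ b → b ≤ n → f b ≤ rsz T1' b := by
      intro b hb1 hb2
      by_cases h0 : f b = 0
      · omega
      · set c := b + f b with hc
        have hIcb : I c b := hfP b h0
        have hcn : c ≤ n := (hIbd _ _ hIcb).2.1
        obtain ⟨z, hz1, hz2, hz3, hz4⟩ := lca (T := T1') (b := b) (c := c) hb1 (by omega) (by omega)
        rcases eq_or_lt_of_le hz1 with rfl | hbz
        · have := (decIff (show b < c by omega)).1 hz4
          omega
        · exfalso
          have hIbz : I b z := H1 _ _ (Or.inr ⟨hbz, by omega, hz3⟩)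
          rcases eq_or_lt_of_le hz2 with rfl | hzc
          · exact hirr b (htrans _ _ _ hIbz hIcb)
          · have hIzb : I z b := hax5 b z c hbz hzc hIcb
            exact hirr b (htrans _ _ _ hIbz hIzb)
    obtain ⟨T2, hT2s, ht12, hT2e⟩ := main_up f hf_le_n hfnest
      (∑ b ∈ Finset.Icc 1 n, (f b - rsz T1 b)) T1 h1 hf_ge le_rfl
    have ht21' : TamariLE T2 T1' := by
      apply tamari_of_rsz_le (by omega)
      intro b hb1 hb2
      rw [hT2e b hb1 (by omega)]
      exact hf_le' b hb1 (by omega)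
    refine ⟨T2, hT2s, ht12, ht21', fun a b => ?_⟩
    constructor
    · intro hIab
      have hbd := hIbd a b hIab
      rcases lt_trichotomy a b with hab | rfl | hba
      · by_cases hP : IPrel T1 T1' a b
        · rcases hP with ⟨hba', _⟩ | hinc
          · omega
          · exact Or.inr hinc
        · exact absurd (H2 a b hIab hP) (by omega)
      · exact absurd hIab (hirr a)
      · left
        have := (hfchar a b hba).1 hIab
        refine ⟨hba, by omega, (decIff hba).2 ⟨by omega, ?_⟩⟩
        rw [hT2e b (by omega) (by omega)]
        omega
    · rintro (⟨hba, hne, hsub⟩ | ⟨hab, hne, hsub⟩)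
      · have hd := (decIff hba).1 hsub
        have hbd := inSub_bounds hsub
        apply (hfchar a b hba).2
        refine ⟨hd.1, ?_⟩
        rw [← hT2e b hd.1 (by omega)]
        exact hd.2
      · exact H1 a b (Or.inr ⟨hab, hne, hsub⟩)

def mirror : BinTree → BinTree
  | leaf => leaf
  | node l r => node (mirror r) (mirror l)

@[simp] lemma size_mirror (T : BinTree) : (mirror T).size = T.size := by
  induction T with
  | leaf => rfl
  | node l r ihl ihr => simp only [mirror, size, ihl, ihr]; omega

@[simp] lemma mirror_mirror (T : BinTree) : mirror (mirror T) = T := by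
  induction T with
  | leaf => rfl
  | node l r ihl ihr => simp [mirror, ihl, ihr]

lemma rot_mirror {T T' : BinTree} (h : Rot T T') : Rot (mirror T') (mirror T) := by
  induction h with
  | root A B C => exact Rot.root (mirror C) (mirror B) (mirror A)
  | left R _ ih => exact Rot.right (mirror R) ih
  | right L _ ih => exact Rot.left (mirror L) ih

lemma tamari_mirror {T T' : BinTree} (h : TamariLE T T') :
    TamariLE (mirror T') (mirror T) := by
  induction h with
  | refl => exact Relation.ReflTransGen.refl
  | tail _ hr ih => exact Relation.ReflTransGen.head (rot_mirror hr) ih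

lemma inSub_mirror_fwd : ∀ {T : BinTree} {a b : ℕ}, inSub (mirror T) a b →
    inSub T (T.size + 1 - a) (T.size + 1 - b) := by
  intro T
  induction T with
  | leaf => intro a b h; exact absurd h (by simp [mirror, inSub])
  | node l r ihl ihr =>
    intro a b h
    rcases h with ⟨hb, h1, h2⟩ | h | ⟨ha, hb, h⟩
    · simp only [size_mirror] at hb h1 h2
      simp only [size] at *
      exact Or.inl ⟨by omega, by omega, by omega⟩
    · have hbd := inSub_bounds h
      simp only [size_mirror] at hbd
      have h3 := ihr h
      simp only [size]
      refine Or.inr (Or.inr ⟨by omega, by omega, ?_⟩)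
      rw [show l.size + r.size + 1 + 1 - a - (l.size + 1) = r.size + 1 - a by omega,
        show l.size + r.size + 1 + 1 - b - (l.size + 1) = r.size + 1 - b by omega]
      exact h3
    · have hbd := inSub_bounds h
      simp only [size_mirror] at hbd ha hb h
      have h3 := ihl h
      simp only [size]
      refine Or.inr (Or.inl ?_)
      rw [show l.size + r.size + 1 + 1 - a = l.size + 1 - (a - (r.size + 1)) by omega,
        show l.size + r.size + 1 + 1 - b = l.size + 1 - (b - (r.size + 1)) by omega]
      exact h3

lemma inSub_mirror_bwd {T : BinTree} {a b : ℕ} (ha1 : 1 ≤ a) (ha2 : a ≤ T.size)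
    (hb1 : 1 ≤ b) (hb2 : b ≤ T.size)
    (h : inSub T (T.size + 1 - a) (T.size + 1 - b)) : inSub (mirror T) a b := by
  have h2 : inSub (mirror (mirror T)) (T.size + 1 - a) (T.size + 1 - b) := by
    rwa [mirror_mirror]
  have h3 := inSub_mirror_fwd h2
  simp only [size_mirror] at h3
  rwa [show T.size + 1 - (T.size + 1 - a) = a by omega,
    show T.size + 1 - (T.size + 1 - b) = b by omega] at h3

lemma decRel_mirror {T : BinTree} {a b : ℕ} :
    decRel (mirror T) a b ↔ incRel T (T.size + 1 - a) (T.size + 1 - b) := by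
  constructor
  · rintro ⟨hba, hne, hsub⟩
    have hbd := inSub_bounds hsub
    simp only [size_mirror] at hbd
    have h3 := inSub_mirror_fwd hsub
    exact ⟨by omega, by omega, h3⟩
  · rintro ⟨hab, hne, hsub⟩
    have hbd := inSub_bounds hsub
    have ha : 1 ≤ a ∧ a ≤ T.size := by omega
    have hb : 1 ≤ b ∧ b ≤ T.size := by omega
    refine ⟨by omega, by omega, ?_⟩
    exact inSub_mirror_bwd ha.1 ha.2 hb.1 hb.2 hsub

lemma incRel_mirror {T : BinTree} {a b : ℕ} :
    incRel (mirror T) a b ↔ decRel T (T.size + 1 - a) (T.size + 1 - b) := by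
  constructor
  · rintro ⟨hab, hne, hsub⟩
    have hbd := inSub_bounds hsub
    simp only [size_mirror] at hbd
    have h3 := inSub_mirror_fwd hsub
    exact ⟨by omega, by omega, h3⟩
  · rintro ⟨hba, hne, hsub⟩
    have hbd := inSub_bounds hsub
    have ha : 1 ≤ a ∧ a ≤ T.size := by omega
    have hb : 1 ≤ b ∧ b ≤ T.size := by omega
    refine ⟨by omega, by omega, ?_⟩
    exact inSub_mirror_bwd ha.1 ha.2 hb.1 hb.2 hsub

lemma IPrel_mirror {n : ℕ} {T T' : BinTree} (hs : T.size = n) (hs' : T'.size = n)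
    {a b : ℕ} :
    IPrel (mirror T') (mirror T) a b ↔ IPrel T T' (n + 1 - a) (n + 1 - b) := by
  unfold IPrel
  rw [or_comm (a := decRel T (n+1-a) (n+1-b))]
  constructor
  · rintro (h | h)
    · exact Or.inl (hs' ▸ decRel_mirror.1 h)
    · exact Or.inr (hs ▸ incRel_mirror.1 h)
  · rintro (h | h)
    · exact Or.inl (decRel_mirror.2 (by rwa [hs']))
    · exact Or.inr (incRel_mirror.2 (by rwa [hs]))

lemma IPrel_bounds {T T' : BinTree} {a b : ℕ} (h : IPrel T T' a b) :
    1 ≤ a ∧ a ≤ T.size ∧ 1 ≤ b ∧ b ≤ T.size ∨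
    1 ≤ a ∧ a ≤ T'.size ∧ 1 ≤ b ∧ b ≤ T'.size := by
  rcases h with ⟨_, _, hsub⟩ | ⟨_, _, hsub⟩
  · exact Or.inl (inSub_bounds hsub)
  · exact Or.inr (inSub_bounds hsub)

lemma IPrel_bounds' {n : ℕ} {T T' : BinTree} (hs : T.size = n) (hs' : T'.size = n)
    {a b : ℕ} (h : IPrel T T' a b) : 1 ≤ a ∧ a ≤ n ∧ 1 ≤ b ∧ b ≤ n := by
  rcases IPrel_bounds h with h | h
  · rw [hs] at h; exact h
  · rw [hs'] at h; exact h

lemma part2 (n : ℕ) (T1 T1' : BinTree)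
    (h1 : T1.size = n) (h1' : T1'.size = n) (ht : TamariLE T1 T1')
    (I : ℕ → ℕ → Prop) (hI : IsIntervalPoset n I) :
    (∃ T3 : BinTree, T3.size = n ∧ TamariLE T1 T3 ∧ TamariLE T3 T1' ∧
        ∀ a b, I a b ↔ IPrel T1 T3 a b) ↔
      ((∀ a b, IPrel T1 T1' a b → I a b) ∧
        ∀ a b, I a b → ¬ IPrel T1 T1' a b → a < b) := by
  obtain ⟨hIbd, hirr, htrans, hax4, hax5⟩ := hI
  set J : ℕ → ℕ → Prop :=
    fun a b => 1 ≤ a ∧ a ≤ n ∧ 1 ≤ b ∧ b ≤ n ∧ I (n + 1 - a) (n + 1 - b) with hJdef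
  have hJ : IsIntervalPoset n J := by
    refine ⟨?_, ?_, ?_, ?_, ?_⟩
    · rintro a b ⟨u1, u2, u3, u4, _⟩; exact ⟨u1, u2, u3, u4⟩
    · rintro a ⟨_, _, _, _, h⟩; exact hirr _ h
    · rintro a b c ⟨ha1, ha2, _, _, h⟩ ⟨_, _, hc1, hc2, h'⟩
      exact ⟨ha1, ha2, hc1, hc2, htrans _ _ _ h h'⟩
    · rintro a b c hab hbc ⟨ha1, ha2, hc1, hc2, h⟩
      refine ⟨by omega, by omega, hc1, hc2, ?_⟩
      exact hax5 (n + 1 - c) (n + 1 - b) (n + 1 - a) (by omega) (by omega) h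
    · rintro a b c hab hbc ⟨hc1, hc2, ha1, ha2, h⟩
      refine ⟨by omega, by omega, ha1, ha2, ?_⟩
      exact hax4 (n + 1 - c) (n + 1 - b) (n + 1 - a) (by omega) (by omega) h
  have hpart := part1 n (mirror T1') (mirror T1)
    (by simpa using h1') (by simpa using h1) (tamari_mirror ht) J hJ
  have hLHS : (∃ T3 : BinTree, T3.size = n ∧ TamariLE T1 T3 ∧ TamariLE T3 T1' ∧
      ∀ a b, I a b ↔ IPrel T1 T3 a b) ↔
      (∃ T2 : BinTree, T2.size = n ∧ TamariLE (mirror T1') T2 ∧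
        TamariLE T2 (mirror T1) ∧ ∀ a b, J a b ↔ IPrel T2 (mirror T1) a b) := by
    constructor
    · rintro ⟨T3, hs3, h13, h31', hIff⟩
      refine ⟨mirror T3, by simpa using hs3, tamari_mirror h31', tamari_mirror h13,
        fun a b => ?_⟩
      have hmir := IPrel_mirror (n := n) (T := T1) (T' := T3) h1 hs3 (a := a) (b := b)
      constructor
      · rintro ⟨ha1, ha2, hb1, hb2, h⟩
        exact hmir.2 ((hIff _ _).1 h)
      · intro h
        have hbd := IPrel_bounds' (by simpa using hs3) (by simpa using h1) h
        exact ⟨hbd.1, hbd.2.1, hbd.2.2.1, hbd.2.2.2, (hIff _ _).2 (hmir.1 h)⟩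
    · rintro ⟨T2, hs2, hm1, hm2, hJiff⟩
      refine ⟨mirror T2, by simpa using hs2, by simpa using tamari_mirror hm2,
        by simpa using tamari_mirror hm1, fun a b => ?_⟩
      have hmir := IPrel_mirror (n := n) (T := T1) (T' := mirror T2) h1
        (by simpa using hs2) (a := n + 1 - a) (b := n + 1 - b)
      constructor
      · intro hIab
        have hbd := hIbd a b hIab
        have hJ' : J (n + 1 - a) (n + 1 - b) := by
          refine ⟨by omega, by omega, by omega, by omega, ?_⟩
          rw [show n + 1 - (n + 1 - a) = a by omega, show n + 1 - (n + 1 - b) = b by omega]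
          exact hIab
        have h2 : IPrel (mirror (mirror T2)) (mirror T1) (n + 1 - a) (n + 1 - b) := by
          rw [mirror_mirror]; exact (hJiff _ _).1 hJ'
        have h3 := hmir.1 h2
        rwa [show n + 1 - (n + 1 - a) = a by omega,
          show n + 1 - (n + 1 - b) = b by omega] at h3
      · intro h
        have hbd := IPrel_bounds' h1 (by simpa using hs2) h
        have h2 : IPrel T1 (mirror T2) (n + 1 - (n + 1 - a)) (n + 1 - (n + 1 - b)) := by
          rwa [show n + 1 - (n + 1 - a) = a by omega,
            show n + 1 - (n + 1 - b) = b by omega]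
        have h3 := hmir.2 h2
        rw [mirror_mirror] at h3
        have h4 := (hJiff _ _).2 h3
        obtain ⟨_, _, _, _, h5⟩ := h4
        rwa [show n + 1 - (n + 1 - a) = a by omega,
          show n + 1 - (n + 1 - b) = b by omega] at h5
  have hRHS1 : (∀ a b, IPrel (mirror T1') (mirror T1) a b → J a b) ↔
      (∀ a b, IPrel T1 T1' a b → I a b) := by
    constructor
    · intro h a b hip
      have hbd := IPrel_bounds' h1 h1' hip
      have hip' : IPrel (mirror T1') (mirror T1) (n + 1 - a) (n + 1 - b) := by
        apply (IPrel_mirror (n := n) h1 h1').2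
        rwa [show n + 1 - (n + 1 - a) = a by omega,
          show n + 1 - (n + 1 - b) = b by omega]
      obtain ⟨_, _, _, _, h5⟩ := h _ _ hip'
      rwa [show n + 1 - (n + 1 - a) = a by omega,
        show n + 1 - (n + 1 - b) = b by omega] at h5
    · intro h a b hip
      have hbd := IPrel_bounds' (by simpa using h1') (by simpa using h1) hip
      have h2 := (IPrel_mirror (n := n) h1 h1').1 hip
      exact ⟨hbd.1, hbd.2.1, hbd.2.2.1, hbd.2.2.2, h _ _ h2⟩
  have hRHS2 : (∀ a b, J a b → ¬ IPrel (mirror T1') (mirror T1) a b → b < a) ↔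
      (∀ a b, I a b → ¬ IPrel T1 T1' a b → a < b) := by
    constructor
    · intro h a b hIab hnot
      have hbd := hIbd a b hIab
      have hJ' : J (n + 1 - a) (n + 1 - b) := by
        refine ⟨by omega, by omega, by omega, by omega, ?_⟩
        rw [show n + 1 - (n + 1 - a) = a by omega, show n + 1 - (n + 1 - b) = b by omega]
        exact hIab
      have hnot' : ¬ IPrel (mirror T1') (mirror T1) (n + 1 - a) (n + 1 - b) := by
        intro hip
        apply hnot
        have h2 := (IPrel_mirror (n := n) h1 h1').1 hip
        rwa [show n + 1 - (n + 1 - a) = a by omega,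
          show n + 1 - (n + 1 - b) = b by omega] at h2
      have := h _ _ hJ' hnot'
      omega
    · intro h a b hJab hnot
      obtain ⟨ha1, ha2, hb1, hb2, hIab⟩ := hJab
      have hnot' : ¬ IPrel T1 T1' (n + 1 - a) (n + 1 - b) := by
        intro hip
        exact hnot ((IPrel_mirror (n := n) h1 h1').2 hip)
      have := h _ _ hIab hnot'
      omega
  rw [hLHS, hpart, hRHS1, hRHS2]

end BinTree

/-- Let `[T1,T1']` be a Tamari interval of size `n` with interval-poset
`I1 = IP[T1,T1']` and let `I` be an interval-poset of size `n`. Then `I = IP[T2,T1']`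
for some binary tree `T2` with `T1 ≤ T2 ≤ T1'` iff every relation of `I1` is a relation
of `I` and every new relation of `I` is decreasing; symmetrically `I = IP[T1,T3]` for some
`T3` with `T1 ≤ T3 ≤ T1'` iff every relation of `I1` is a relation of `I` and every new
relation of `I` is increasing. -/
theorem interval_minmax_inclusion (n : ℕ) (T1 T1' : BinTree)
    (h1 : T1.size = n) (h1' : T1'.size = n) (ht : TamariLE T1 T1')
    (I : ℕ → ℕ → Prop) (hI : IsIntervalPoset n I) :
    ((∃ T2 : BinTree, T2.size = n ∧ TamariLE T1 T2 ∧ TamariLE T2 T1' ∧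
        ∀ a b, I a b ↔ IPrel T2 T1' a b) ↔
      ((∀ a b, IPrel T1 T1' a b → I a b) ∧
        ∀ a b, I a b → ¬ IPrel T1 T1' a b → b < a)) ∧
    ((∃ T3 : BinTree, T3.size = n ∧ TamariLE T1 T3 ∧ TamariLE T3 T1' ∧
        ∀ a b, I a b ↔ IPrel T1 T3 a b) ↔
      ((∀ a b, IPrel T1 T1' a b → I a b) ∧
        ∀ a b, I a b → ¬ IPrel T1 T1' a b → a < b)) := by
  exact ⟨BinTree.part1 n T1 T1' h1 h1' ht I hI, BinTree.part2 n T1 T1' h1 h1' ht I hI⟩
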